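/- Let (φ, Q, ξ, η, g) be a weak almost contact metric structure on V and suppose there is a real λ > 0 with Q X = λ·X for all X ∈ D = ker η. Define φ' := λ^(−1/2)·φ. Then (φ', ξ, η) is an almost contact structure: φ'(φ' X) = −X + η(X)·ξ for all X ∈ V, together with φ' ξ = 0 and η(φ' X) = 0 for all X. -/

import Mathlib

open RealInnerProductSpace

theorem weak_acm_stmt_12 {V : Type*} [NormedAddCommGroup V] [InnerProductSpace ℝ V]
    [FiniteDimensional ℝ V]
    {n : ℕ} (hn : 1 ≤ n) (hdim : Module.finrank ℝ V = 2 * n + 1)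
    (φ Q : V →ₗ[ℝ] V) (hQbij : Function.Bijective Q)
    (ξ : V) (η : V →ₗ[ℝ] ℝ)
    (hηξ : η ξ = 1)
    (hφφ : ∀ X : V, φ (φ X) = -(Q X) + η X • ξ)
    (hQξ : Q ξ = ξ)
    (hD : ∀ X : V, η X = 0 → η (φ X) = 0)
    (hcomp : ∀ X Y : V, ⟪φ X, φ Y⟫ = ⟪X, Q Y⟫ - η X * η Y)
    (lam : ℝ) (hlam : 0 < lam) (hQD : ∀ X : V, η X = 0 → Q X = lam • X)
    (φ' : V →ₗ[ℝ] V) (hφ' : ∀ X : V, φ' X = (Real.sqrt lam)⁻¹ • φ X)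
    :
    (∀ X : V, φ' (φ' X) = -X + η X • ξ) ∧ φ' ξ = 0 ∧ (∀ X : V, η (φ' X) = 0) := by
  have hlam0 : lam ≠ 0 := ne_of_gt hlam
  have hs : Real.sqrt lam * Real.sqrt lam = lam := Real.mul_self_sqrt hlam.le
  have hξ0 : ξ ≠ 0 := by
    intro h; rw [h, map_zero] at hηξ; norm_num at hηξ
  -- φ ξ = 0
  have hφφξ : φ (φ ξ) = 0 := by rw [hφφ, hQξ, hηξ, one_smul, neg_add_cancel]
  have hQφξ : Q (φ ξ) = η (φ ξ) • ξ := by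
    have h := hφφ (φ ξ)
    rw [hφφξ, map_zero] at h
    linear_combination (norm := module) h
  have hX0 : η (φ ξ - η (φ ξ) • ξ) = 0 := by simp [hηξ]
  have hQX0 : Q (φ ξ - η (φ ξ) • ξ) = 0 := by
    rw [map_sub, map_smul, hQξ, hQφξ, sub_self]
  have hX0z : φ ξ - η (φ ξ) • ξ = 0 := by
    have h := hQD _ hX0
    rw [hQX0] at h
    rcases smul_eq_zero.mp h.symm with h' | h'
    · exact absurd h' hlam0
    · exact h'
  have hφξeq : φ ξ = η (φ ξ) • ξ := sub_eq_zero.mp hX0z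
  have ha : η (φ ξ) = 0 := by
    have h : η (φ ξ) • φ ξ = 0 := by rw [← map_smul, ← hφξeq, hφφξ]
    nth_rewrite 2 [hφξeq] at h
    rw [smul_smul] at h
    rcases smul_eq_zero.mp h with h' | h'
    · exact mul_self_eq_zero.mp h'
    · exact absurd h' hξ0
  have hφξ : φ ξ = 0 := by rw [hφξeq, ha, zero_smul]
  -- η ∘ φ = 0
  have hηφ : ∀ X : V, η (φ X) = 0 := by
    intro X
    have h0 : η (X - η X • ξ) = 0 := by simp [hηξ]
    have := hD _ h0
    rw [map_sub, map_smul, hφξ, smul_zero, sub_zero] at this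
    exact this
  refine ⟨?_, ?_, ?_⟩
  · intro X
    have h0 : η (X - η X • ξ) = 0 := by simp [hηξ]
    have hQX : Q X = lam • (X - η X • ξ) + η X • ξ := by
      have := hQD _ h0
      rw [map_sub, map_smul, hQξ] at this
      linear_combination (norm := module) this
    rw [hφ' (φ' X), hφ' X, map_smul, hφφ X, hQX]
    have hs0 : Real.sqrt lam ≠ 0 := by positivity
    match_scalars <;> field_simp <;> nlinarith [hs, (by rw [Real.sq_sqrt hlam.le] : Real.sqrt lam ^ 2 * η X = lam * η X)]
  · rw [hφ', hφξ, smul_zero]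
  · intro X
    rw [hφ', map_smul, hηφ, smul_zero]
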